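/- (Practical bound, Eq. (6).) Equip ℝⁿ with the ℓ1 norm. Let 0 < α ≤ β, let η > 0 with η ≤ 2α, let 2 ≤ b, and let M ⊂ ℝⁿ be a finite set with |M| = m and b ≤ m, such that every subset S ⊆ M with |S| = b is α-β-connected. If m − b + 1 > (2β/η + 1)ⁿ − (2α/η − 1)ⁿ, then M is not η-separated; i.e., there exist z, z' ∈ M with z ≠ z' and ‖z − z'‖₁ < η. -/

import Mathlib

/-- The ℓ1 norm on `ℝⁿ`. -/
def l1norm (n : ℕ) (x : Fin n → ℝ) : ℝ := ∑ i, |x i|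

open MeasureTheory Set Pointwise ENNReal

lemma l1_nonneg (n : ℕ) (x : Fin n → ℝ) : 0 ≤ l1norm n x :=
  Finset.sum_nonneg fun i _ => abs_nonneg _

lemma l1_sub_comm (n : ℕ) (x y : Fin n → ℝ) : l1norm n (x - y) = l1norm n (y - x) := by
  unfold l1norm; exact Finset.sum_congr rfl fun i _ => by simp [abs_sub_comm]

lemma l1_tri (n : ℕ) (x y : Fin n → ℝ) : l1norm n (x + y) ≤ l1norm n x + l1norm n y := by
  unfold l1norm; rw [← Finset.sum_add_distrib]
  exact Finset.sum_le_sum fun i _ => by simpa using abs_add_le (x i) (y i)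

lemma l1_tri3 (n : ℕ) (x x' y : Fin n → ℝ) :
    l1norm n (x - x') ≤ l1norm n (y - x) + l1norm n (y - x') := by
  have : x - x' = -(y - x) + (y - x') := by abel
  rw [this]
  calc l1norm n (-(y-x) + (y - x')) ≤ l1norm n (-(y-x)) + l1norm n (y - x') := l1_tri _ _ _
  _ = l1norm n (y-x) + l1norm n (y - x') := by
      congr 1; unfold l1norm; exact Finset.sum_congr rfl fun i _ => by simp [abs_sub_comm]

lemma l1_smul (n : ℕ) (r : ℝ) (x : Fin n → ℝ) : l1norm n (r • x) = |r| * l1norm n x := by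
  unfold l1norm; rw [Finset.mul_sum]
  exact Finset.sum_congr rfl fun i _ => by simp [abs_mul]

lemma l1_cont (n : ℕ) (x : Fin n → ℝ) : Continuous fun y : Fin n → ℝ => l1norm n (y - x) := by
  unfold l1norm
  simp only [Pi.sub_apply]
  exact continuous_finset_sum _ fun i _ => ((continuous_apply i).sub continuous_const).abs

lemma vol_ball (n : ℕ) (hn : n ≠ 0) (z : Fin n → ℝ) {r : ℝ} (hr : 0 ≤ r) :
    volume {y : Fin n → ℝ | l1norm n (y - z) < r}
      = ENNReal.ofReal (r ^ n) * volume {y : Fin n → ℝ | l1norm n y < 1} := by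
  rcases eq_or_lt_of_le hr with rfl | hr
  · have : {y : Fin n → ℝ | l1norm n (y - z) < 0} = ∅ := by
      ext y; simpa using l1_nonneg n (y - z)
    simp [this, zero_pow hn]
  · have hU : {y : Fin n → ℝ | l1norm n (y - z) < r}
        = z +ᵥ (r • {y : Fin n → ℝ | l1norm n y < 1}) := by
      ext y
      rw [Set.mem_vadd_set_iff_neg_vadd_mem, ← Set.preimage_smul_inv₀ hr.ne']
      simp only [Set.mem_preimage, Set.mem_setOf_eq, l1_smul, abs_inv, abs_of_pos hr]
      rw [inv_mul_lt_iff₀ hr, mul_one]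
      have : -z +ᵥ y = y - z := by simp [vadd_eq_add]; abel
      rw [this]
    rw [hU, measure_vadd, Measure.addHaar_smul_of_nonneg volume hr.le _,
      Module.finrank_fin_fun ℝ]

lemma l1_cont' (n : ℕ) : Continuous (l1norm n) := by
  have := l1_cont n 0
  simpa using this

lemma c_pos (n : ℕ) : 0 < volume {y : Fin n → ℝ | l1norm n y < 1} := by
  have hop : IsOpen {y : Fin n → ℝ | l1norm n y < 1} :=
    isOpen_lt (l1_cont' n) continuous_const
  refine hop.measure_pos volume ⟨0, ?_⟩
  simp [l1norm]

lemma c_fin (n : ℕ) : volume {y : Fin n → ℝ | l1norm n y < 1} < ⊤ := by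
  have hsub : {y : Fin n → ℝ | l1norm n y < 1} ⊆ Set.univ.pi fun _ => Set.Icc (-1 : ℝ) 1 := by
    intro y hy i _
    have h1 : |y i| ≤ l1norm n y := by
      unfold l1norm
      exact Finset.single_le_sum (fun j _ => abs_nonneg (y j)) (Finset.mem_univ i)
    have := h1.trans hy.le
    rw [abs_le] at this
    exact this
  calc volume {y : Fin n → ℝ | l1norm n y < 1} ≤ volume (Set.univ.pi fun _ : Fin n => Set.Icc (-1 : ℝ) 1) :=
        measure_mono hsub
  _ = ∏ _i : Fin n, volume (Set.Icc (-1 : ℝ) 1) := volume_pi_pi _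
  _ < ⊤ := by
      rw [Finset.prod_const, Real.volume_Icc]
      exact ENNReal.pow_lt_top (by norm_num)

/-- `S` is α-β-connected (w.r.t. the ℓ1 norm on `ℝⁿ`):
(i) `α` is the minimum of the pairwise distances of `S`, and
(ii) `β` is the minimum of all `r ≥ 0` such that the graph on `S` joining two
distinct points exactly when their distance is `≤ r` is connected. -/
def ABConnected (n : ℕ) (α β : ℝ) (S : Finset (Fin n → ℝ)) : Prop :=
  IsLeast {d : ℝ | ∃ x ∈ S, ∃ y ∈ S, x ≠ y ∧ l1norm n (x - y) = d} α ∧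
  IsLeast {r : ℝ | 0 ≤ r ∧
    (SimpleGraph.fromRel
      (fun a b : {x // x ∈ S} => l1norm n (a.1 - b.1) ≤ r)).Connected} β

/-- Practical bound, Eq. (6): in `(ℝⁿ, ‖·‖₁)`, if every `b`-sized
subset of `M` (`|M| = m ≥ b ≥ 2`) is α-β-connected (`0 < α ≤ β`, `0 < η ≤ 2α`) and
`m − b + 1 > (2β/η + 1)ⁿ − (2α/η − 1)ⁿ`, then `M` is not η-separated. -/
theorem practical_bound
    (n : ℕ) (b m : ℕ) (hb : 2 ≤ b)
    (α β η : ℝ) (hα : 0 < α) (hαβ : α ≤ β) (hη : 0 < η) (hηα : η ≤ 2 * α)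
    (M : Finset (Fin n → ℝ)) (hM : M.card = m) (hbm : b ≤ m)
    (hconn : ∀ S ⊆ M, S.card = b → ABConnected n α β S)
    (hcard : ((m - b + 1 : ℕ) : ℝ) > (2 * β / η + 1) ^ n - (2 * α / η - 1) ^ n) :
    ∃ z ∈ M, ∃ z' ∈ M, z ≠ z' ∧ l1norm n (z - z') < η := by
  classical
  by_contra hcon
  push_neg at hcon
  -- n ≠ 0
  have hn : n ≠ 0 := by
    rintro rfl
    have h1 : M.card ≤ 1 := Finset.card_le_one.mpr fun a _ c _ => Subsingleton.elim a c
    omega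
  -- all pairwise distances ≥ α
  have halpha : ∀ x ∈ M, ∀ y ∈ M, x ≠ y → α ≤ l1norm n (x - y) := by
    intro x hx y hy hxy
    obtain ⟨S, hsub, hSM, hScard⟩ := Finset.exists_subsuperset_card_eq
      (t := M) (s := {x, y}) (by
        intro a ha
        rcases Finset.mem_insert.mp ha with rfl | ha
        · exact hx
        · rwa [Finset.mem_singleton.mp ha])
      ((Finset.card_insert_le _ _).trans (by simp [hb])) (hM ▸ hbm)
    exact (hconn S hSM hScard).1.2 ⟨x, hsub (Finset.mem_insert_self _ _), y,
      hsub (Finset.mem_insert_of_mem (Finset.mem_singleton_self _)), hxy, rfl⟩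
  -- pick a point z
  obtain ⟨z, hz⟩ : M.Nonempty := Finset.card_pos.mp (by omega)
  -- split the rest of M into near and far points
  set N := (M.erase z).filter (fun x => l1norm n (x - z) ≤ β) with hNdef
  set F := (M.erase z).filter (fun x => ¬ l1norm n (x - z) ≤ β) with hFdef
  have hNF : N.card + F.card = m - 1 := by
    rw [hNdef, hFdef, Finset.card_filter_add_card_filter_not,
      Finset.card_erase_of_mem hz, hM]
  -- at most b-2 far points
  have hFcard : F.card ≤ b - 2 := by
    by_contra hFc
    push_neg at hFc
    obtain ⟨T, hTF, hTcard⟩ := Finset.exists_subset_card_eq (s := F) (n := b - 1) (by omega)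
    have hTsub : T ⊆ M.erase z := hTF.trans (Finset.filter_subset _ _)
    have hzT : z ∉ T := fun h => (Finset.mem_erase.mp (hTsub h)).1 rfl
    have hSM : insert z T ⊆ M :=
      Finset.insert_subset hz (hTsub.trans (Finset.erase_subset _ _))
    have hScard : (insert z T).card = b := by
      rw [Finset.card_insert_of_notMem hzT, hTcard]; omega
    obtain ⟨hb0, hgconn⟩ := (hconn _ hSM hScard).2.1
    obtain ⟨t, ht⟩ : T.Nonempty := Finset.card_pos.mp (by omega)
    have hzS : z ∈ insert z T := Finset.mem_insert_self _ _
    have htS : t ∈ insert z T := Finset.mem_insert_of_mem ht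
    obtain ⟨p⟩ := hgconn.preconnected ⟨z, hzS⟩ ⟨t, htS⟩
    cases p with
    | nil => exact hzT (by simpa using ht)
    | @cons _ w _ h p' =>
      rw [SimpleGraph.fromRel_adj] at h
      obtain ⟨hne, hor⟩ := h
      have hwz : w.1 ≠ z := fun hh => hne (Subtype.ext hh.symm)
      have hwT : w.1 ∈ T := by
        rcases Finset.mem_insert.mp w.2 with hh | hh
        · exact absurd hh hwz
        · exact hh
      have hwF := hTF hwT
      rw [hFdef, Finset.mem_filter] at hwF
      refine hwF.2 ?_
      rcases hor with hh | hh
      · rwa [l1_sub_comm] at hh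
      · exact hh
  have hNcard : m - b + 1 ≤ N.card := by omega
  -- measure-theoretic packing
  set c := volume {y : Fin n → ℝ | l1norm n y < 1} with hc
  have hc0 : c ≠ 0 := (c_pos n).ne'
  have hct : c ≠ ⊤ := (c_fin n).ne
  have hη2 : (0:ℝ) < η / 2 := by linarith
  have hαη : (0:ℝ) ≤ α - η / 2 := by linarith
  set B : (Fin n → ℝ) → Set (Fin n → ℝ) := fun x => {y | l1norm n (y - x) < η/2} with hB
  have hNM : ∀ x ∈ N, x ∈ M ∧ x ≠ z ∧ α ≤ l1norm n (x - z) ∧ l1norm n (x - z) ≤ β := by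
    intro x hx
    rw [hNdef, Finset.mem_filter, Finset.mem_erase] at hx
    exact ⟨hx.1.2, hx.1.1, halpha x hx.1.2 z hz hx.1.1, hx.2⟩
  have hdisj : (N : Set (Fin n → ℝ)).PairwiseDisjoint B := by
    intro x hx x' hx' hne
    rw [Function.onFun, Set.disjoint_left]
    intro y hy hy'
    have h1 : η ≤ l1norm n (x - x') :=
      hcon x (hNM x (Finset.mem_coe.mp hx)).1 x' (hNM x' (Finset.mem_coe.mp hx')).1 hne
    have h2 := l1_tri3 n x x' y
    simp only [hB, Set.mem_setOf_eq] at hy hy'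
    linarith
  have hBmeas : ∀ x : Fin n → ℝ, MeasurableSet (B x) := fun x =>
    (isOpen_lt (l1_cont n x) continuous_const).measurableSet
  set C := {y : Fin n → ℝ | l1norm n (y - z) ≤ α - η/2} with hC
  have hCmeas : MeasurableSet C :=
    (isClosed_le (l1_cont n z) continuous_const).measurableSet
  have hUC : Disjoint (⋃ x ∈ N, B x) C := by
    rw [Set.disjoint_left]
    intro y hy hyC
    simp only [Set.mem_iUnion] at hy
    obtain ⟨x, hx, hyB⟩ := hy
    obtain ⟨-, -, hax, -⟩ := hNM x hx
    have h2 := l1_tri3 n x z y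
    simp only [hB, hC, Set.mem_setOf_eq] at hyB hyC
    linarith
  have hsubB : (⋃ x ∈ N, B x) ∪ C ⊆ {y : Fin n → ℝ | l1norm n (y - z) < β + η/2} := by
    intro y hy
    rcases hy with hy | hy
    · simp only [Set.mem_iUnion] at hy
      obtain ⟨x, hx, hyB⟩ := hy
      obtain ⟨-, -, -, hbx⟩ := hNM x hx
      have h2 := l1_tri3 n y z x
      rw [l1_sub_comm n x y] at h2
      simp only [hB, Set.mem_setOf_eq] at hyB ⊢
      rw [l1_sub_comm n x z] at h2
      linarith [l1_sub_comm n z x ▸ h2]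
    · simp only [hC, Set.mem_setOf_eq] at hy ⊢
      linarith
  have hvolU : volume (⋃ x ∈ N, B x) = (N.card : ℝ≥0∞) * (ENNReal.ofReal ((η/2)^n) * c) := by
    rw [measure_biUnion_finset hdisj (fun x _ => hBmeas x)]
    have : ∀ x ∈ N, volume (B x) = ENNReal.ofReal ((η/2)^n) * c := fun x _ =>
      vol_ball n hn x hη2.le
    rw [Finset.sum_congr rfl this, Finset.sum_const, nsmul_eq_mul]
  have hvolC : ENNReal.ofReal ((α - η/2)^n) * c ≤ volume C := by
    rw [← vol_ball n hn z hαη]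
    refine measure_mono fun y hy => ?_
    simp only [Set.mem_setOf_eq] at hy ⊢
    exact hy.le
  have hkey : (N.card : ℝ≥0∞) * (ENNReal.ofReal ((η/2)^n) * c) + ENNReal.ofReal ((α-η/2)^n) * c
      ≤ ENNReal.ofReal ((β+η/2)^n) * c := by
    rw [← vol_ball n hn z (by linarith : (0:ℝ) ≤ β + η/2)]
    calc (N.card : ℝ≥0∞) * (ENNReal.ofReal ((η/2)^n) * c) + ENNReal.ofReal ((α-η/2)^n) * c
        ≤ volume (⋃ x ∈ N, B x) + volume C := add_le_add hvolU.ge hvolC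
      _ = volume ((⋃ x ∈ N, B x) ∪ C) := (measure_union hUC hCmeas).symm
      _ ≤ _ := measure_mono hsubB
  have hreal : (N.card : ℝ) * (η/2)^n + (α-η/2)^n ≤ (β+η/2)^n := by
    have h1 : (N.card : ℝ≥0∞) * ENNReal.ofReal ((η/2)^n) + ENNReal.ofReal ((α-η/2)^n)
        ≤ ENNReal.ofReal ((β+η/2)^n) := by
      rw [← mul_assoc, ← add_mul] at hkey
      exact (ENNReal.mul_le_mul_iff_left hc0 hct).mp hkey
    rw [← ENNReal.ofReal_natCast, ← ENNReal.ofReal_mul (Nat.cast_nonneg _),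
      ← ENNReal.ofReal_add (mul_nonneg (Nat.cast_nonneg _) (pow_nonneg hη2.le n))
        (pow_nonneg hαη n)] at h1
    exact (ENNReal.ofReal_le_ofReal_iff (pow_nonneg (by linarith) n)).mp h1
  have e1 : β + η/2 = (η/2) * (2*β/η + 1) := by field_simp
  have e2 : α - η/2 = (η/2) * (2*α/η - 1) := by field_simp
  have ht : (0:ℝ) < (η/2)^n := pow_pos hη2 n
  have hNle : (N.card : ℝ) ≤ (2*β/η+1)^n - (2*α/η-1)^n := by
    rw [e1, e2, mul_pow, mul_pow] at hreal
    nlinarith [ht, hreal]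
  have hfin : ((m - b + 1 : ℕ) : ℝ) ≤ (N.card : ℝ) := Nat.cast_le.mpr hNcard
  linarith
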